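/- For distinct α, α' ∈ ℂ, the 4-dimensional algebras W03^α and W03^{α'} with products e1e1 = e2, e1e3 = (α+1)e4, e2e2 = e4, e3e1 = α e4 (respectively with α') are not isomorphic as ℂ-algebras. -/
import Mathlib


/-- The multiplication of the 4-dimensional complex algebra `W03^α`:
`e1e1 = e2`, `e1e3 = (α+1) e4`, `e2e2 = e4`, `e3e1 = α e4`. -/
def w03mul (α : ℂ) (x y : Fin 4 → ℂ) : Fin 4 → ℂ :=
  ![0, x 0 * y 0, 0,
    (α + 1) * (x 0 * y 2) + x 1 * y 1 + α * (x 2 * y 0)]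

/-- For distinct `α, α'` the algebras `W03^α` and `W03^{α'}` are not isomorphic. -/
theorem stmt_15 {α α' : ℂ} (h : α ≠ α') :
    ¬ ∃ φ : (Fin 4 → ℂ) ≃ₗ[ℂ] (Fin 4 → ℂ),
        ∀ x y : Fin 4 → ℂ, φ (w03mul α x y) = w03mul α' (φ x) (φ y) := by
  rintro ⟨φ, hφ⟩
  set e1 : Fin 4 → ℂ := ![1,0,0,0] with he1
  set e3 : Fin 4 → ℂ := ![0,0,1,0] with he3
  set e4 : Fin 4 → ℂ := ![0,0,0,1] with he4
  -- e3 * e3 = 0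
  have h33 : w03mul α e3 e3 = 0 := by
    funext i; fin_cases i <;> simp [w03mul, he3]
  have hcc : w03mul α' (φ e3) (φ e3) = 0 := by
    rw [← hφ, h33, map_zero]
  have hc0 : φ e3 0 = 0 := by
    have := congrFun hcc 1
    simp [w03mul] at this
    exact this
  have hc1 : φ e3 1 = 0 := by
    have := congrFun hcc 3
    simp [w03mul, hc0] at this
    exact this
  have h22 : w03mul α (w03mul α e1 e1) (w03mul α e1 e1) = e4 := by
    funext i; fin_cases i <;> simp [w03mul, he1, he4]
  have hd : φ e4 = w03mul α' (w03mul α' (φ e1) (φ e1)) (w03mul α' (φ e1) (φ e1)) := by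
    rw [← h22, hφ, hφ]
  have hd3 : φ e4 3 = (φ e1 0)^4 := by
    rw [hd]; simp [w03mul]; ring
  have ha0 : φ e1 0 ≠ 0 := by
    intro h0
    have hz : φ e4 = 0 := by
      rw [hd]; funext i; fin_cases i <;> simp [w03mul, h0]
    have he : e4 = 0 := φ.injective (by simp [hz])
    have := congrFun he 3
    simp [he4] at this
  have h13 : w03mul α e1 e3 = (α+1) • e4 := by
    funext i; fin_cases i <;> simp [w03mul, he1, he3, he4]
  have h31 : w03mul α e3 e1 = α • e4 := by
    funext i; fin_cases i <;> simp [w03mul, he1, he3, he4]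
  have E1 : (α+1) * (φ e1 0)^4 = (α'+1) * (φ e1 0 * φ e3 2) := by
    have := hφ e1 e3
    rw [h13, map_smul] at this
    have := congrFun this 3
    simp [w03mul, hc0, hc1, hd3] at this
    linear_combination this
  have E2 : α * (φ e1 0)^4 = α' * (φ e3 2 * φ e1 0) := by
    have := hφ e3 e1
    rw [h31, map_smul] at this
    have := congrFun this 3
    simp [w03mul, hc0, hc1, hd3] at this
    linear_combination this
  have key : (φ e1 0)^4 = φ e1 0 * φ e3 2 := by linear_combination E1 - E2
  have hz : (α - α') * (φ e1 0)^4 = 0 := by linear_combination E2 - α' * key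
  have h4 : (φ e1 0)^4 ≠ 0 := pow_ne_zero _ ha0
  rcases mul_eq_zero.mp hz with h' | h'
  · exact h (sub_eq_zero.mp h')
  · exact h4 h'
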